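/- Define the real sequence (m_k)_{k ≥ 1} by m_1 = 1 and, for k ≥ 2, m_k = ((1/2)/((3/2)^k − 3/2)) · Σ_{j=1}^{k−1} C(k,j)·m_j·m_{k−j}. Then for every k ≥ 1, the normalized k-th moment of the number of cycles of a uniform nonsimple binary butterfly permutation converges: lim_{n→∞} (2/3)^{nk} · (1/2^{2^n − 1}) · Σ_{σ ∈ B_{2^n}} C(σ)^k = m_k. -/

import Mathlib

open Equiv Equiv.Perm


/-- Kronecker product of permutations: `(i, r) ↦ (σ i, π r)` under the
row-major identification `Fin (a * b) ≃ Fin a × Fin b`. -/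
def permKron {a b : ℕ} (σ : Equiv.Perm (Fin a)) (π : Equiv.Perm (Fin b)) :
    Equiv.Perm (Fin (a * b)) :=
  finProdFinEquiv.symm.trans ((Equiv.prodCongr σ π).trans finProdFinEquiv)

/-- Direct (block) sum of permutations: `(i, r) ↦ (i, π i r)`. -/
def permBlockSum {a b : ℕ} (π : Fin a → Equiv.Perm (Fin b)) :
    Equiv.Perm (Fin (a * b)) :=
  finProdFinEquiv.symm.trans ((Equiv.prodCongrRight π).trans finProdFinEquiv)

/-- The simple `m`-nary butterfly permutations of `Fin (m ^ n)`:
Kronecker products `τ^{a₁} ⊗ ⋯ ⊗ τ^{aₙ}` of powers of the standard `m`-cycle `τ = finRotate m`. -/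
def simpleButterfly (m : ℕ) : (n : ℕ) → Set (Equiv.Perm (Fin (m ^ n)))
  | 0 => {1}
  | n + 1 =>
    {σ | ∃ (a : ℤ) (π : Equiv.Perm (Fin (m ^ n))), π ∈ simpleButterfly m n ∧
      σ = (finCongr (pow_succ' m n).symm).permCongr (permKron (finRotate m ^ a) π)}

/-- The nonsimple `m`-nary butterfly permutations of `Fin (m ^ n)`:
`B₀ = {1}`, `B_{n+1} = {(τ^a ⊗ id) ∘ (σ₁ ⊕ ⋯ ⊕ σ_m) : σᵢ ∈ B_n}`. -/
def nonsimpleButterfly (m : ℕ) : (n : ℕ) → Set (Equiv.Perm (Fin (m ^ n)))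
  | 0 => {1}
  | n + 1 =>
    {σ | ∃ (a : ℤ) (π : Fin m → Equiv.Perm (Fin (m ^ n))),
      (∀ i, π i ∈ nonsimpleButterfly m n) ∧
      σ = (finCongr (pow_succ' m n).symm).permCongr
        (permKron (finRotate m ^ a) 1 * permBlockSum π)}

/-- The length of the longest increasing subsequence of a permutation. -/
noncomputable def LIS {M : ℕ} (σ : Equiv.Perm (Fin M)) : ℕ :=
  sSup {k | ∃ t : Finset (Fin M), t.card = k ∧ StrictMonoOn (⇑σ) ↑t}

/-- The length of the longest decreasing subsequence of a permutation. -/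
noncomputable def LDS {M : ℕ} (σ : Equiv.Perm (Fin M)) : ℕ :=
  sSup {k | ∃ t : Finset (Fin M), t.card = k ∧ StrictAntiOn (⇑σ) ↑t}

/-- The number of cycles in the disjoint cycle decomposition of `σ`,
counting fixed points as cycles of length 1. -/
def numCycles {M : ℕ} (σ : Equiv.Perm (Fin M)) : ℕ :=
  Multiset.card σ.cycleType + (Finset.univ.filter fun x => σ x = x).card

/-- The number of fixed points of `σ`. -/
def numFixed {M : ℕ} (σ : Equiv.Perm (Fin M)) : ℕ :=
  (Finset.univ.filter fun x => σ x = x).card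

/-- The limiting moment sequence: `m₁ = 1` and for `k ≥ 2`,
`m_k = ((1/2)/((3/2)^k − 3/2)) · Σ_{j=1}^{k−1} C(k,j)·m_j·m_{k−j}`. -/
noncomputable def cycleMoment : ℕ → ℝ
  | 0 => 1
  | 1 => 1
  | k + 2 =>
    ((1 / 2) / ((3 / 2 : ℝ) ^ (k + 2) - 3 / 2)) *
      ∑ j ∈ (Finset.Ico 1 (k + 2)).attach,
        (((k + 2).choose j.1 : ℕ) : ℝ) * cycleMoment j.1 * cycleMoment (k + 2 - j.1)
  decreasing_by
  · have := j.2; rw [Finset.mem_Ico] at this; omega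
  · have := j.2; rw [Finset.mem_Ico] at this; omega


variable {α β : Type*}

/-- Same-cycle setoid. -/
def scS (σ : Perm α) : Setoid α :=
  ⟨σ.SameCycle, ⟨SameCycle.refl σ, fun h => h.symm, fun h h' => h.trans h'⟩⟩

noncomputable def cyclesCount (σ : Perm α) : ℕ := Nat.card (Quotient (scS σ))

theorem sc_eq_of_fix {σ : Perm α} {x y : α} (hxy : σ.SameCycle x y)
    (h : σ x = x) : y = x := by
  obtain ⟨i, rfl⟩ := hxy
  exact zpow_apply_eq_self_of_apply_eq_self h i

theorem cyclesCount_eq [Fintype α] [DecidableEq α] (σ : Perm α) :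
    cyclesCount σ = σ.cycleFactorsFinset.card
      + (Finset.univ.filter fun x => σ x = x).card := by
  classical
  have key : Quotient (scS σ) ≃
      ({c // c ∈ σ.cycleFactorsFinset} ⊕ {x // σ x = x}) := by
    refine Equiv.ofBijective (Quotient.lift (fun x =>
      if h : σ x = x then Sum.inr ⟨x, h⟩ else
        Sum.inl ⟨σ.cycleOf x, cycleOf_mem_cycleFactorsFinset_iff.mpr (mem_support.2 h)⟩) ?_) ⟨?_, ?_⟩
    · rintro x y (hxy : σ.SameCycle x y)
      by_cases h : σ x = x
      · have hyx := sc_eq_of_fix hxy h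
        subst hyx; rfl
      · have h' : σ y ≠ y := fun hy => h (by simpa [sc_eq_of_fix hxy.symm hy] using hy)
        simp only [dif_neg h, dif_neg h']
        exact congrArg Sum.inl (Subtype.ext hxy.cycleOf_eq)
    · intro a b hq
      obtain ⟨x, rfl⟩ := Quotient.exists_rep a
      obtain ⟨y, rfl⟩ := Quotient.exists_rep b
      by_cases hx : σ x = x <;> by_cases hy : σ y = y
      · simp only [Quotient.lift_mk, dif_pos hx, dif_pos hy] at hq
        obtain rfl : x = y := by simpa using hq
        rfl
      · simp only [Quotient.lift_mk, dif_pos hx, dif_neg hy] at hq; simp at hq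
      · simp only [Quotient.lift_mk, dif_neg hx, dif_pos hy] at hq; simp at hq
      · simp only [Quotient.lift_mk, dif_neg hx, dif_neg hy] at hq
        simp only [Sum.inl.injEq, Subtype.mk.injEq] at hq
        refine Quotient.sound ?_
        have hmem : y ∈ (σ.cycleOf y).support := by
          rw [mem_support_cycleOf_iff]
          exact ⟨SameCycle.refl _ _, mem_support.2 hy⟩
        rw [← hq, mem_support_cycleOf_iff] at hmem
        exact hmem.1
    · rintro (⟨c, hc⟩ | ⟨x, hx⟩)
      · obtain ⟨x, hx⟩ := (mem_cycleFactorsFinset_iff.mp hc).1.nonempty_support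
        have hcx : c = σ.cycleOf x := cycle_is_cycleOf hx hc
        have hsx : σ x ≠ x := by
          have := (mem_cycleFactorsFinset_iff.mp hc).2 x hx
          rw [← this]; exact mem_support.1 hx
        exact ⟨⟦x⟧, by simp [dif_neg hsx, ← hcx]⟩
      · exact ⟨⟦x⟧, by simp [dif_pos hx]⟩
  rw [cyclesCount, Nat.card_congr key]
  simp [Nat.card_sum, Nat.card_eq_fintype_card, Fintype.card_subtype]


/-- permCongr as a MulEquiv -/
def permCongrM (e : α ≃ β) : Perm α ≃* Perm β :=
  { e.permCongr with map_mul' := fun f g => by ext x; simp }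

theorem permCongr_zpow (e : α ≃ β) (σ : Perm α) (i : ℤ) :
    e.permCongr (σ ^ i) = e.permCongr σ ^ i := map_zpow (permCongrM e) σ i

theorem sameCycle_permCongr (e : α ≃ β) (σ : Perm α) {x y : α} :
    (e.permCongr σ).SameCycle (e x) (e y) ↔ σ.SameCycle x y := by
  have key : ∀ i : ℤ, (e.permCongr σ ^ i) (e x) = e ((σ ^ i) x) := fun i => by
    rw [← permCongr_zpow]; simp
  constructor
  · rintro ⟨i, hi⟩
    exact ⟨i, e.injective (by rw [← key i, hi])⟩
  · rintro ⟨i, hi⟩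
    exact ⟨i, by rw [key i, hi]⟩

theorem cyclesCount_permCongr (e : α ≃ β) (σ : Perm α) :
    cyclesCount (e.permCongr σ) = cyclesCount σ := by
  refine (Nat.card_congr (Quotient.congr e ?_)).symm
  intro a b
  exact (sameCycle_permCongr e σ).symm

/-- prodCongrRight as a MonoidHom from the product group. -/
def prodCongrRightHom : (α → Perm β) →* Perm (α × β) where
  toFun := prodCongrRight
  map_one' := by ext ⟨a, x⟩ : 2 <;> simp
  map_mul' f g := by ext ⟨a, x⟩ : 2 <;> simp

theorem prodCongrRight_pow (π : α → Perm β) (i : ℕ) :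
    prodCongrRight π ^ i = prodCongrRight (fun a => π a ^ i) := by
  have := map_pow prodCongrRightHom π i
  exact this.symm

theorem prodCongrRight_zpow (π : α → Perm β) (i : ℤ) :
    prodCongrRight π ^ i = prodCongrRight (fun a => π a ^ i) := by
  have := map_zpow prodCongrRightHom π i
  exact this.symm

theorem sameCycle_prodCongrRight (π : α → Perm β) {a b : α} {x y : β} :
    Equiv.Perm.SameCycle (prodCongrRight π) (a, x) (b, y) ↔ a = b ∧ (π a).SameCycle x y := by
  constructor
  · rintro ⟨i, hi⟩
    rw [prodCongrRight_zpow] at hi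
    simp only [prodCongrRight_apply, Prod.mk.injEq] at hi
    exact ⟨hi.1, i, hi.2⟩
  · rintro ⟨rfl, i, hi⟩
    exact ⟨i, by rw [prodCongrRight_zpow]; simp [hi]⟩

theorem cyclesCount_prodCongrRight [Fintype α] [Finite β] (π : α → Perm β) :
    cyclesCount (prodCongrRight π) = ∑ a, cyclesCount (π a) := by
  have key : Quotient (scS (prodCongrRight π)) ≃ Σ a : α, Quotient (scS (π a)) := by
    refine
      { toFun := Quotient.lift (fun p => ⟨p.1, Quotient.mk (scS (π p.1)) p.2⟩) ?_
        invFun := fun q => Quotient.lift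
          (fun x => Quotient.mk (scS (prodCongrRight π)) (q.1, x)) ?_ q.2
        left_inv := ?_
        right_inv := ?_ }
    · rintro ⟨a, x⟩ ⟨b, y⟩ h
      obtain ⟨rfl, h2⟩ := (sameCycle_prodCongrRight π).mp
        (h : Equiv.Perm.SameCycle (prodCongrRight π) (a, x) (b, y))
      exact Sigma.ext rfl (heq_of_eq (Quotient.sound h2))
    · intro x y h
      exact Quotient.sound ((sameCycle_prodCongrRight π).mpr ⟨rfl, h⟩)
    · intro q
      obtain ⟨⟨a, x⟩, rfl⟩ := Quotient.exists_rep q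
      rfl
    · rintro ⟨a, q⟩
      obtain ⟨x, rfl⟩ := Quotient.exists_rep q
      rfl
  classical
  haveI : ∀ a, Fintype (Quotient (scS (π a))) := fun a => Fintype.ofFinite _
  rw [cyclesCount, Nat.card_congr key]
  simp [Nat.card_eq_fintype_card, Fintype.card_sigma, cyclesCount]


section SwapLift
variable (π : Fin 2 → Perm β)

private def ρπ : Perm (Fin 2 × β) := prodCongr (finRotate 2) (1 : Perm β) * prodCongrRight π

theorem rho_apply (i : Fin 2) (x : β) : ρπ π (i, x) = (finRotate 2 i, π i x) := by
  simp [ρπ, Perm.mul_apply]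

theorem rho_pow (m : ℕ) (x : β) :
    (ρπ π ^ (2 * m)) (0, x) = (0, ((π 1 * π 0) ^ m) x) ∧
    (ρπ π ^ (2 * m + 1)) (0, x) = (1, π 0 (((π 1 * π 0) ^ m) x)) := by
  induction m with
  | zero =>
    refine ⟨by simp, ?_⟩
    norm_num
    rw [rho_apply]
    simp [show finRotate 2 0 = 1 by decide]
  | succ m ih =>
    have h1 : (ρπ π ^ (2 * (m + 1))) (0, x) = (0, ((π 1 * π 0) ^ (m + 1)) x) := by
      have : 2 * (m + 1) = (2 * m + 1) + 1 := by ring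
      rw [this, pow_succ', Perm.mul_apply, ih.2, rho_apply]
      simp [show finRotate 2 1 = 0 by decide, pow_succ', Perm.mul_apply]
    refine ⟨h1, ?_⟩
    rw [pow_succ', Perm.mul_apply, h1, rho_apply]
    simp [show finRotate 2 0 = 1 by decide]

theorem sc_zero_iff [Finite β] (x y : β) :
    Equiv.Perm.SameCycle (ρπ π) (0, x) (0, y) ↔ (π 1 * π 0).SameCycle x y := by
  constructor
  · intro h
    obtain ⟨i, _, hi⟩ := h.exists_pow_eq'
    rcases Nat.even_or_odd i with ⟨m, hm⟩ | ⟨m, hm⟩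
    · subst hm
      rw [show m + m = 2 * m by ring, (rho_pow π m x).1] at hi
      exact ⟨m, by simpa [zpow_natCast] using congrArg Prod.snd hi⟩
    · subst hm
      rw [(rho_pow π m x).2] at hi
      exact absurd (congrArg Prod.fst hi) (by simp)
  · intro h
    obtain ⟨i, _, hi⟩ := h.exists_pow_eq'
    exact ⟨(2 * i : ℕ), by rw [zpow_natCast, (rho_pow π i x).1, hi]⟩

theorem sc_one_zero (x : β) :
    Equiv.Perm.SameCycle (ρπ π) (1, x) (0, π 1 x) :=
  ⟨1, by rw [zpow_one, rho_apply]; simp [show finRotate 2 1 = 0 by decide]⟩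

private def repπ : Fin 2 × β → β := fun p => if p.1 = 0 then p.2 else π 1 p.2

theorem sc_rep (p : Fin 2 × β) :
    Equiv.Perm.SameCycle (ρπ π) p ((0 : Fin 2), repπ π p) := by
  obtain ⟨i, x⟩ := p
  fin_cases i
  · simp only [repπ, if_pos rfl]
    exact SameCycle.refl _ _
  · simp only [repπ]
    norm_num
    exact sc_one_zero π x

theorem cyclesCount_swapLift [Finite β] :
    cyclesCount (ρπ π) = cyclesCount (π 1 * π 0) := by
  have key : Quotient (scS (ρπ π)) ≃ Quotient (scS (π 1 * π 0)) := by
    refine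
      { toFun := Quotient.lift (fun p => Quotient.mk (scS (π 1 * π 0)) (repπ π p)) ?_
        invFun := Quotient.lift
          (fun x => Quotient.mk (scS (ρπ π)) ((0 : Fin 2), x)) ?_
        left_inv := ?_
        right_inv := ?_ }
    · intro p q h
      have h' : Equiv.Perm.SameCycle (ρπ π) ((0 : Fin 2), repπ π p) ((0 : Fin 2), repπ π q) :=
        ((sc_rep π p).symm.trans (h : Equiv.Perm.SameCycle (ρπ π) p q)).trans (sc_rep π q)
      exact Quotient.sound ((sc_zero_iff π _ _).mp h')
    · intro x y h
      exact Quotient.sound ((sc_zero_iff π x y).mpr h)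
    · intro q
      obtain ⟨p, rfl⟩ := Quotient.exists_rep q
      exact Quotient.sound (sc_rep π p).symm
    · intro q
      obtain ⟨x, rfl⟩ := Quotient.exists_rep q
      exact Quotient.sound (Equiv.Perm.SameCycle.refl _ _)
  exact Nat.card_congr key

end SwapLift


/-- Parameter type for binary butterflies. -/
def Tb : ℕ → Type
  | 0 => Unit
  | n + 1 => Bool × Tb n × Tb n

def TbFintype : (n : ℕ) → Fintype (Tb n)
  | 0 => inferInstanceAs (Fintype Unit)
  | n + 1 => letI := TbFintype n; inferInstanceAs (Fintype (Bool × Tb n × Tb n))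

attribute [instance] TbFintype

def Eeq (n : ℕ) : (Fin 2 × Fin (2 ^ n)) ≃ Fin (2 ^ (n + 1)) :=
  finProdFinEquiv.trans (finCongr (pow_succ' 2 n).symm)

def toPermP : (n : ℕ) → Tb n → Equiv.Perm (Fin (2 ^ n))
  | 0, _ => 1
  | n + 1, t =>
    (Eeq n).permCongr
      (Equiv.prodCongr (if t.1 then finRotate 2 else 1) 1 *
        Equiv.prodCongrRight ![toPermP n t.2.1, toPermP n t.2.2])

theorem rot_sq : finRotate 2 * finRotate 2 = 1 := by
  ext x
  fin_cases x <;> rfl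

theorem rot_zpow_even {a : ℤ} (h : Even a) : finRotate 2 ^ a = 1 := by
  obtain ⟨m, rfl⟩ := h
  rw [show m + m = 2 * m by ring, zpow_mul, show ((2 : ℤ)) = ((2 : ℕ) : ℤ) by norm_num,
    zpow_natCast, pow_two, rot_sq, one_zpow]

theorem rot_zpow_odd {a : ℤ} (h : Odd a) : finRotate 2 ^ a = finRotate 2 := by
  obtain ⟨m, rfl⟩ := h
  rw [zpow_add, zpow_one, rot_zpow_even ⟨m, two_mul m⟩, one_mul]

theorem matrix_eta {X : Type*} (π : Fin 2 → X) : ![π 0, π 1] = π := by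
  funext i; fin_cases i <;> simp

theorem bridge (n : ℕ) (σ : Equiv.Perm (Fin 2)) (π : Fin 2 → Equiv.Perm (Fin (2 ^ n))) :
    (finCongr (pow_succ' 2 n).symm).permCongr (permKron σ 1 * permBlockSum π)
      = (Eeq n).permCongr (Equiv.prodCongr σ 1 * Equiv.prodCongrRight π) := by
  ext x
  simp [permKron, permBlockSum, Eeq, Equiv.Perm.mul_apply]

theorem toPermP_range (n : ℕ) : Set.range (toPermP n) = nonsimpleButterfly 2 n := by
  induction n with
  | zero =>
    ext σ
    simp only [nonsimpleButterfly, Set.mem_singleton_iff]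
    constructor
    · rintro ⟨t, rfl⟩; rfl
    · rintro rfl; exact ⟨(), rfl⟩
  | succ n ih =>
    ext σ
    constructor
    · rintro ⟨⟨b, t₁, t₂⟩, rfl⟩
      refine ⟨if b then 1 else 0, ![toPermP n t₁, toPermP n t₂], ?_, ?_⟩
      · intro i
        rw [← ih]
        fin_cases i
        · exact ⟨t₁, by simp⟩
        · exact ⟨t₂, by simp⟩
      · rw [bridge]
        cases b
        · simp [toPermP, rot_zpow_even (by norm_num : Even (0 : ℤ))]
        · simp [toPermP, rot_zpow_odd (by norm_num : Odd (1 : ℤ))]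
    · rintro ⟨a, π, hπ, rfl⟩
      have h0 : ∃ t, toPermP n t = π 0 := by rw [← ih] at hπ; exact hπ 0
      have h1 : ∃ t, toPermP n t = π 1 := by rw [← ih] at hπ; exact hπ 1
      obtain ⟨t₁, ht₁⟩ := h0
      obtain ⟨t₂, ht₂⟩ := h1
      rcases Int.even_or_odd a with he | ho
      · refine ⟨(false, t₁, t₂), ?_⟩
        rw [bridge, rot_zpow_even he]
        simp only [toPermP, if_neg Bool.false_ne_true]
        rw [ht₁, ht₂, matrix_eta]
      · refine ⟨(true, t₁, t₂), ?_⟩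
        rw [bridge, rot_zpow_odd ho]
        simp only [toPermP, if_pos rfl]
        rw [ht₁, ht₂, matrix_eta]
        simp

theorem toPermP_inj (n : ℕ) : Function.Injective (toPermP n) := by
  induction n with
  | zero => intro t s _; rfl
  | succ n ih =>
    rintro ⟨b, t₁, t₂⟩ ⟨c, s₁, s₂⟩ h
    simp only [toPermP] at h
    have h' := (Eeq n).permCongr.injective h
    have happ : ∀ (i : Fin 2) (x : Fin (2 ^ n)),
        ((if b then finRotate 2 else 1) i, ![toPermP n t₁, toPermP n t₂] i x)
          = ((if c then finRotate 2 else 1) i, ![toPermP n s₁, toPermP n s₂] i x) := by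
      intro i x
      have := congrFun (congrArg (fun (p : Equiv.Perm (Fin 2 × Fin (2 ^ n))) => ⇑p) h') (i, x)
      simpa [Equiv.Perm.mul_apply] using this
    have hbc : b = c := by
      have := congrArg Prod.fst (happ 0 0)
      cases b <;> cases c <;> simp_all <;> exact absurd this (by decide)
    subst hbc
    have ht1 : t₁ = s₁ := ih (Equiv.ext fun x => by
      have := congrArg Prod.snd (happ 0 x); simpa using this)
    have ht2 : t₂ = s₂ := ih (Equiv.ext fun x => by
      have := congrArg Prod.snd (happ 1 x); simpa using this)
    rw [ht1, ht2]
theorem permCongr_mul {α β : Type*} (e : α ≃ β) (f g : Perm α) :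
    e.permCongr (f * g) = e.permCongr f * e.permCongr g := by
  ext x; simp

theorem pcr_comm {α β : Type*} (f : α → Perm β) (e : Perm α) :
    prodCongrRight f * Equiv.prodCongr e (1 : Perm β)
      = Equiv.prodCongr e (1 : Perm β) * prodCongrRight (f ∘ e) := by
  ext ⟨a, x⟩ : 2 <;> simp [Perm.mul_apply]

theorem prodCongr_fst_mul {α β : Type*} (e e' : Perm α) :
    Equiv.prodCongr e (1 : Perm β) * Equiv.prodCongr e' 1
      = Equiv.prodCongr (e * e') (1 : Perm β) := by
  ext ⟨a, x⟩ : 2 <;> simp [Perm.mul_apply]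

theorem pcr_mul {α β : Type*} (f g : α → Perm β) :
    prodCongrRight f * prodCongrRight g = prodCongrRight (fun a => f a * g a) := by
  ext ⟨a, x⟩ : 2 <;> simp [Perm.mul_apply]

theorem matrix_comp (n : ℕ) (t₁ t₂ : Tb n) (j : Fin 2) :
    ![toPermP n t₁, toPermP n t₂] j = toPermP n (![t₁, t₂] j) := by
  fin_cases j <;> simp

theorem toPermP_mul_exists : ∀ (n : ℕ) (t s : Tb n),
    ∃ u, toPermP n u = toPermP n t * toPermP n s
  | 0, _, _ => ⟨(), (one_mul 1).symm⟩
  | n + 1, (b, t₁, t₂), (c, s₁, s₂) => by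
    classical
    set kb : Perm (Fin 2) := if b then finRotate 2 else 1 with hkb
    set kc : Perm (Fin 2) := if c then finRotate 2 else 1 with hkc
    have key : ∀ i : Fin 2, ∃ u, toPermP n u
        = toPermP n (![t₁, t₂] (kc i)) * toPermP n (![s₁, s₂] i) :=
      fun i => toPermP_mul_exists n _ _
    choose u hu using key
    refine ⟨(xor b c, u 0, u 1), ?_⟩
    have hmat : ![toPermP n (u 0), toPermP n (u 1)]
        = fun i => ![toPermP n t₁, toPermP n t₂] (kc i) * ![toPermP n s₁, toPermP n s₂] i := by
      funext i
      fin_cases i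
      · show toPermP n (u 0) = _
        rw [hu 0, ← matrix_comp n t₁ t₂, ← matrix_comp n s₁ s₂]
        rfl
      · show toPermP n (u 1) = _
        rw [hu 1, ← matrix_comp n t₁ t₂, ← matrix_comp n s₁ s₂]
        rfl
    have hk : kb * kc = if xor b c then finRotate 2 else 1 := by
      rw [hkb, hkc]
      cases b <;> cases c <;> simp [rot_sq]
    show (Eeq n).permCongr _ = _
    simp only [toPermP]
    rw [← _root_.permCongr_mul]
    congr 1
    rw [hmat, ← pcr_mul, ← hk, ← prodCongr_fst_mul]
    have hcomm := pcr_comm ![toPermP n t₁, toPermP n t₂] kc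
    calc Equiv.prodCongr (kb * kc) (1 : Perm (Fin (2 ^ n)))
          * (prodCongrRight ((![toPermP n t₁, toPermP n t₂]) ∘ kc)
            * prodCongrRight ![toPermP n s₁, toPermP n s₂])
        = Equiv.prodCongr kb 1 * (Equiv.prodCongr kc 1
            * prodCongrRight ((![toPermP n t₁, toPermP n t₂]) ∘ kc))
            * prodCongrRight ![toPermP n s₁, toPermP n s₂] := by
          rw [← prodCongr_fst_mul]; group
      _ = Equiv.prodCongr kb 1
            * (prodCongrRight ![toPermP n t₁, toPermP n t₂] * Equiv.prodCongr kc 1)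
            * prodCongrRight ![toPermP n s₁, toPermP n s₂] := by rw [← hcomm]
      _ = (Equiv.prodCongr kb 1 * prodCongrRight ![toPermP n t₁, toPermP n t₂])
            * (Equiv.prodCongr kc 1 * prodCongrRight ![toPermP n s₁, toPermP n s₂]) := by group

theorem sum_mul_right {n : ℕ} (s : Tb n) (f : Perm (Fin (2 ^ n)) → ℝ) :
    ∑ t : Tb n, f (toPermP n t * toPermP n s) = ∑ t : Tb n, f (toPermP n t) := by
  classical
  choose F hF using fun t => toPermP_mul_exists n t s
  have hinj : Function.Injective F := by
    intro a b hab
    apply toPermP_inj n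
    have : toPermP n a * toPermP n s = toPermP n b * toPermP n s := by
      rw [← hF a, ← hF b, hab]
    exact mul_right_cancel this
  have hbij : Function.Bijective F := Finite.injective_iff_bijective.mp hinj
  exact Fintype.sum_bijective F hbij _ _ (fun t => by rw [← hF t])

theorem card_Tb : ∀ n : ℕ, Fintype.card (Tb n) = 2 ^ (2 ^ n - 1)
  | 0 => rfl
  | n + 1 => by
    have h : Fintype.card (Tb (n + 1)) = Fintype.card (Bool × Tb n × Tb n) :=
      Fintype.card_congr (Equiv.refl _)
    rw [h, Fintype.card_prod, Fintype.card_prod, Fintype.card_bool, card_Tb n, ← pow_add]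
    have h1 : 1 ≤ 2 ^ n := Nat.one_le_two_pow
    have : 2 ^ n - 1 + (2 ^ n - 1) + 1 = 2 ^ (n + 1) - 1 := by
      rw [pow_succ]; omega
    rw [← pow_succ', this]

theorem prodCongr_one_one {α β : Type*} :
    Equiv.prodCongr (1 : Perm α) (1 : Perm β) = 1 := by
  ext ⟨a, x⟩ : 2 <;> simp

theorem cyclesCount_false (n : ℕ) (t₁ t₂ : Tb n) :
    cyclesCount (toPermP (n + 1) (false, t₁, t₂))
      = cyclesCount (toPermP n t₁) + cyclesCount (toPermP n t₂) := by
  have e0 : toPermP (n + 1) (false, t₁, t₂)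
      = (Eeq n).permCongr (Equiv.prodCongr (1 : Perm (Fin 2)) 1 *
          prodCongrRight ![toPermP n t₁, toPermP n t₂]) := rfl
  rw [e0, cyclesCount_permCongr, prodCongr_one_one, one_mul, cyclesCount_prodCongrRight]
  simp [Fin.sum_univ_two]

theorem cyclesCount_true (n : ℕ) (t₁ t₂ : Tb n) :
    cyclesCount (toPermP (n + 1) (true, t₁, t₂))
      = cyclesCount (toPermP n t₂ * toPermP n t₁) := by
  have e0 : toPermP (n + 1) (true, t₁, t₂)
      = (Eeq n).permCongr (ρπ ![toPermP n t₁, toPermP n t₂]) := rfl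
  rw [e0, cyclesCount_permCongr, cyclesCount_swapLift]
  simp

noncomputable def Sm (k n : ℕ) : ℝ := ∑ t : Tb n, (cyclesCount (toPermP n t) : ℝ) ^ k

theorem Sm_rec (k n : ℕ) : Sm k (n + 1)
    = (∑ j ∈ Finset.range (k + 1), (k.choose j : ℝ) * Sm j n * Sm (k - j) n)
      + (Fintype.card (Tb n) : ℝ) * Sm k n := by
  have h0 : Sm k (n + 1) = ∑ p : Bool × Tb n × Tb n, (cyclesCount (toPermP (n + 1) p) : ℝ) ^ k :=
    Fintype.sum_equiv (Equiv.refl _) _ _ (fun p => rfl)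
  rw [h0, Fintype.sum_prod_type, Fintype.sum_bool]
  have htrue : (∑ q : Tb n × Tb n, (cyclesCount (toPermP (n + 1) (true, q)) : ℝ) ^ k)
      = (Fintype.card (Tb n) : ℝ) * Sm k n := by
    rw [Fintype.sum_prod_type]
    have : ∀ t₁ : Tb n, (∑ t₂ : Tb n, (cyclesCount (toPermP (n + 1) (true, t₁, t₂)) : ℝ) ^ k)
        = Sm k n := by
      intro t₁
      have : (∑ t₂ : Tb n, (cyclesCount (toPermP (n + 1) (true, t₁, t₂)) : ℝ) ^ k)
          = ∑ t₂ : Tb n, (fun σ => (cyclesCount σ : ℝ) ^ k) (toPermP n t₂ * toPermP n t₁) := by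
        refine Finset.sum_congr rfl fun t₂ _ => ?_
        rw [cyclesCount_true]
      rw [this, sum_mul_right t₁ (fun σ => (cyclesCount σ : ℝ) ^ k)]
      rfl
    simp only [this]
    rw [Finset.sum_const, Finset.card_univ, nsmul_eq_mul]
  have hfalse : (∑ q : Tb n × Tb n, (cyclesCount (toPermP (n + 1) (false, q)) : ℝ) ^ k)
      = ∑ j ∈ Finset.range (k + 1), (k.choose j : ℝ) * Sm j n * Sm (k - j) n := by
    rw [Fintype.sum_prod_type]
    have step1 : ∀ t₁ t₂ : Tb n, (cyclesCount (toPermP (n + 1) (false, t₁, t₂)) : ℝ) ^ k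
        = ∑ j ∈ Finset.range (k + 1), (cyclesCount (toPermP n t₁) : ℝ) ^ j
            * (cyclesCount (toPermP n t₂) : ℝ) ^ (k - j) * (k.choose j : ℝ) := by
      intro t₁ t₂
      rw [cyclesCount_false]
      push_cast
      exact add_pow _ _ k
    simp only [step1]
    trans (∑ x : Tb n, ∑ j ∈ Finset.range (k + 1), ∑ y : Tb n,
      (cyclesCount (toPermP n x) : ℝ) ^ j * (cyclesCount (toPermP n y) : ℝ) ^ (k - j)
        * (k.choose j : ℝ))
    · exact Finset.sum_congr rfl fun x _ => Finset.sum_comm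
    trans (∑ j ∈ Finset.range (k + 1), ∑ x : Tb n, ∑ y : Tb n,
      (cyclesCount (toPermP n x) : ℝ) ^ j * (cyclesCount (toPermP n y) : ℝ) ^ (k - j)
        * (k.choose j : ℝ))
    · exact Finset.sum_comm
    refine Finset.sum_congr rfl fun j _ => ?_
    rw [show (k.choose j : ℝ) * Sm j n * Sm (k - j) n = (Sm j n * Sm (k - j) n) * (k.choose j : ℝ)
      by ring]
    simp only [Sm]
    rw [Finset.sum_mul_sum, Finset.sum_mul]
    refine Finset.sum_congr rfl fun x _ => ?_
    rw [Finset.sum_mul]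
  rw [htrue, hfalse]
  ring
noncomputable def An (k n : ℕ) : ℝ :=
  (2 / 3 : ℝ) ^ (n * k) * ((1 / (2 : ℝ) ^ (2 ^ n - 1)) * Sm k n)

theorem Sm_eq (j n : ℕ) : Sm j n = (3 / 2 : ℝ) ^ (n * j) * 2 ^ (2 ^ n - 1) * An j n := by
  have hdef : An j n = (2 / 3 : ℝ) ^ (n * j) * ((1 / 2 ^ (2 ^ n - 1)) * Sm j n) := rfl
  have h : ((3 : ℝ) / 2) ^ (n * j) * ((2 : ℝ) / 3) ^ (n * j) = 1 := by
    rw [← mul_pow]; norm_num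
  have hN : ((2 : ℝ)) ^ (2 ^ n - 1) ≠ 0 := by positivity
  rw [hdef]
  symm
  calc (3 / 2 : ℝ) ^ (n * j) * 2 ^ (2 ^ n - 1)
        * ((2 / 3 : ℝ) ^ (n * j) * ((1 / 2 ^ (2 ^ n - 1)) * Sm j n))
      = ((3 / 2 : ℝ) ^ (n * j) * ((2 : ℝ) / 3) ^ (n * j))
        * ((2 : ℝ) ^ (2 ^ n - 1) * (1 / 2 ^ (2 ^ n - 1))) * Sm j n := by ring
    _ = Sm j n := by rw [h, mul_one_div_cancel hN, one_mul, one_mul]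

theorem An_zero (n : ℕ) : An 0 n = 1 := by
  have h1 : Sm 0 n = (Fintype.card (Tb n) : ℝ) := by simp [Sm]
  have hN : ((2 : ℝ)) ^ (2 ^ n - 1) ≠ 0 := by positivity
  show (2 / 3 : ℝ) ^ (n * 0) * ((1 / 2 ^ (2 ^ n - 1)) * Sm 0 n) = 1
  rw [h1, card_Tb n, Nat.mul_zero, pow_zero, one_mul]
  push_cast
  field_simp

theorem An_rec (k n : ℕ) :
    An k (n + 1) = (2 / 3 : ℝ) ^ k / 2 *
      ((∑ j ∈ Finset.range (k + 1), (k.choose j : ℝ) * An j n * An (k - j) n) + An k n) := by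
  have hstep : An k (n + 1)
      = (2 / 3 : ℝ) ^ ((n + 1) * k) * ((1 / 2 ^ (2 ^ (n + 1) - 1)) * Sm k (n + 1)) := rfl
  rw [hstep, Sm_rec, card_Tb n]
  have hsum : (∑ j ∈ Finset.range (k + 1), (k.choose j : ℝ) * Sm j n * Sm (k - j) n)
      = (3 / 2 : ℝ) ^ (n * k) * ((2 : ℝ) ^ (2 ^ n - 1) * 2 ^ (2 ^ n - 1))
        * ∑ j ∈ Finset.range (k + 1), (k.choose j : ℝ) * An j n * An (k - j) n := by
    rw [Finset.mul_sum]
    refine Finset.sum_congr rfl fun j hj => ?_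
    rw [Sm_eq j n, Sm_eq (k - j) n]
    have hjk : j ≤ k := Nat.lt_succ_iff.mp (Finset.mem_range.mp hj)
    have hpow : (3 / 2 : ℝ) ^ (n * j) * (3 / 2 : ℝ) ^ (n * (k - j)) = (3 / 2 : ℝ) ^ (n * k) := by
      rw [← pow_add]
      congr 1
      have hh : j + (k - j) = k := by omega
      calc n * j + n * (k - j) = n * (j + (k - j)) := by ring
        _ = n * k := by rw [hh]
    rw [← hpow]
    ring
  rw [hsum, Sm_eq k n]
  have e1 : (2 / 3 : ℝ) ^ ((n + 1) * k) = (2 / 3 : ℝ) ^ (n * k) * (2 / 3 : ℝ) ^ k := by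
    rw [← pow_add]; congr 1; ring
  have e2 : (2 : ℝ) ^ (2 ^ (n + 1) - 1) = 2 ^ (2 ^ n - 1) * 2 ^ (2 ^ n - 1) * 2 := by
    rw [← pow_add, ← pow_succ]
    congr 1
    have h1 : 1 ≤ 2 ^ n := Nat.one_le_two_pow
    rw [pow_succ]
    omega
  rw [e1, e2]
  have h23 : ((2 : ℝ) / 3) ^ (n * k) * ((3 : ℝ) / 2) ^ (n * k) = 1 := by
    rw [← mul_pow]; norm_num
  have hN : ((2 : ℝ)) ^ (2 ^ n - 1) ≠ 0 := by positivity
  push_cast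
  field_simp
  linear_combination ((∑ j ∈ Finset.range (k + 1), (k.choose j : ℝ) * An j n * An (k - j) n) + An k n) * h23

theorem An_k0 (k : ℕ) : An k 0 = 1 := by
  have hcc : cyclesCount (toPermP 0 ()) = 1 := by
    show cyclesCount (1 : Perm (Fin (2 ^ 0))) = 1
    rw [cyclesCount_eq]
    simp [Equiv.Perm.cycleFactorsFinset_one]
  have hS : Sm k 0 = 1 := by
    have h0 : Sm k 0 = ∑ t : Unit, (cyclesCount (toPermP 0 t) : ℝ) ^ k :=
      Fintype.sum_equiv (Equiv.refl _) _ _ (fun _ => rfl)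
    rw [h0]
    simp [hcc]
  show (2 / 3 : ℝ) ^ (0 * k) * ((1 / 2 ^ (2 ^ 0 - 1)) * Sm k 0) = 1
  rw [hS]
  norm_num

theorem An_one (n : ℕ) : An 1 n = 1 := by
  induction n with
  | zero => exact An_k0 1
  | succ n ih =>
    rw [An_rec, Finset.sum_range_succ, Finset.sum_range_one]
    simp only [Nat.choose_zero_right, Nat.choose_self, Nat.sub_zero, Nat.sub_self]
    rw [An_zero, ih]
    norm_num

theorem affine_tendsto {α : ℝ} (hα0 : 0 ≤ α) (hα1 : α < 1) {x β : ℕ → ℝ} {b : ℝ}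
    (hrec : ∀ n, x (n + 1) = α * x n + β n)
    (hβ : Filter.Tendsto β Filter.atTop (nhds b)) :
    Filter.Tendsto x Filter.atTop (nhds (b / (1 - α))) := by
  set L := b / (1 - α) with hL
  have h1α : (0 : ℝ) < 1 - α := by linarith
  have hLb : b = L * (1 - α) := by rw [hL]; field_simp
  rw [Metric.tendsto_atTop]
  intro ε hε
  obtain ⟨N, hN⟩ := Metric.tendsto_atTop.mp hβ (ε * (1 - α) / 2) (by positivity)
  have key : ∀ m, |x (N + m) - L| ≤ α ^ m * |x N - L| + ε / 2 := by
    intro m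
    induction m with
    | zero => simp; linarith
    | succ m ih =>
      have he : |β (N + m) - b| < ε * (1 - α) / 2 := by
        have := hN (N + m) (Nat.le_add_right N m)
        rwa [Real.dist_eq] at this
      have hstep : x (N + (m + 1)) - L = α * (x (N + m) - L) + (β (N + m) - b) := by
        have : N + (m + 1) = (N + m) + 1 := by ring
        rw [this, hrec (N + m), hLb]; ring
      calc |x (N + (m + 1)) - L|
          = |α * (x (N + m) - L) + (β (N + m) - b)| := by rw [hstep]
        _ ≤ α * |x (N + m) - L| + |β (N + m) - b| := by
            refine (abs_add_le _ _).trans ?_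
            rw [abs_mul, abs_of_nonneg hα0]
        _ ≤ α * (α ^ m * |x N - L| + ε / 2) + ε * (1 - α) / 2 := by
            have h2 := mul_le_mul_of_nonneg_left ih hα0
            linarith [he.le]
        _ ≤ α ^ (m + 1) * |x N - L| + ε / 2 := by
            rw [pow_succ]
            nlinarith [pow_nonneg hα0 m, abs_nonneg (x N - L)]
  have hpow : Filter.Tendsto (fun m => α ^ m * |x N - L|) Filter.atTop (nhds 0) := by
    simpa using (tendsto_pow_atTop_nhds_zero_of_lt_one hα0 hα1).mul_const |x N - L|
  obtain ⟨M, hM⟩ := Metric.tendsto_atTop.mp hpow (ε / 2) (by positivity)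
  refine ⟨N + M, fun n hn => ?_⟩
  obtain ⟨m, rfl, hMm⟩ : ∃ m, n = N + m ∧ M ≤ m := ⟨n - N, by omega, by omega⟩
  have mono : α ^ m * |x N - L| ≤ α ^ M * |x N - L| :=
    mul_le_mul_of_nonneg_right (pow_le_pow_of_le_one hα0 hα1.le hMm) (abs_nonneg _)
  have h1 : α ^ M * |x N - L| < ε / 2 := by
    have := hM M le_rfl
    rw [Real.dist_eq, sub_zero, abs_of_nonneg (by positivity)] at this
    exact this
  rw [Real.dist_eq]
  calc |x (N + m) - L| ≤ α ^ m * |x N - L| + ε / 2 := key m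
    _ < ε := by linarith

theorem ratio_eq {c D S : ℝ} (h1 : c * D = 1) (hD : D - 3 / 2 ≠ 0) (hc : c ≠ 0) :
    (1 / 2) / (D - 3 / 2) * S = (c / 2 * S) / (1 - 3 * (c / 2)) := by
  have hD' : (1 : ℝ) - 3 * (c / 2) = c * (D - 3 / 2) := by linear_combination (-1 : ℝ) * h1
  have h2 : c * (D - 3 / 2) ≠ 0 := mul_ne_zero hc hD
  rw [hD', eq_div_iff h2]
  have h3 : D * 2 - 3 ≠ 0 := by intro h; apply hD; linarith
  rw [show (1 / 2) / (D - 3 / 2) * S * (c * (D - 3 / 2)) = c / 2 * S * ((D - 3 / 2) / (D - 3 / 2)) by ring, div_self hD, mul_one]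

theorem cycleMoment_eq (k : ℕ) :
    cycleMoment (k + 2) = ((1 / 2) / ((3 / 2 : ℝ) ^ (k + 2) - 3 / 2)) *
      ∑ j ∈ Finset.Ico 1 (k + 2),
        ((k + 2).choose j : ℝ) * cycleMoment j * cycleMoment (k + 2 - j) := by
  rw [cycleMoment]
  congr 1
  exact Finset.sum_attach (Finset.Ico 1 (k + 2))
    (fun j => (((k + 2).choose j : ℕ) : ℝ) * cycleMoment j * cycleMoment (k + 2 - j))

theorem An_tendsto (k : ℕ) :
    Filter.Tendsto (fun n => An k n) Filter.atTop (nhds (cycleMoment k)) := by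
  induction k using Nat.strong_induction_on with
  | _ k IH =>
    rcases k with _ | _ | k
    · have h : cycleMoment 0 = 1 := by simp [cycleMoment]
      rw [h]
      exact tendsto_const_nhds.congr fun n => (An_zero n).symm
    · have h : cycleMoment 1 = 1 := by simp [cycleMoment]
      rw [h]
      exact tendsto_const_nhds.congr fun n => (An_one n).symm
    · set K := k + 2 with hK
      set c : ℝ := (2 / 3 : ℝ) ^ K with hc
      have hc0 : (0 : ℝ) < c := by positivity
      have hcle : c ≤ (2 / 3 : ℝ) ^ 2 :=
        pow_le_pow_of_le_one (by norm_num) (by norm_num) (by omega)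
      have hc49 : c ≤ 4 / 9 := by norm_num at hcle; linarith
      have hα1 : 3 * (c / 2) < 1 := by linarith
      set Sl : ℝ := ∑ j ∈ Finset.Ico 1 K,
        (K.choose j : ℝ) * cycleMoment j * cycleMoment (K - j) with hSl
      have hrec : ∀ n, An K (n + 1) = (3 * (c / 2)) * An K n
          + (c / 2) * ∑ j ∈ Finset.Ico 1 K, (K.choose j : ℝ) * An j n * An (K - j) n := by
        intro n
        rw [An_rec]
        have hpeel : (∑ j ∈ Finset.range (K + 1), (K.choose j : ℝ) * An j n * An (K - j) n)
            = An K n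
              + ((∑ j ∈ Finset.Ico 1 K, (K.choose j : ℝ) * An j n * An (K - j) n) + An K n) := by
          rw [Finset.sum_range_succ, Finset.range_eq_Ico,
            Finset.sum_eq_sum_Ico_succ_bot (by omega : 0 < K)]
          rw [Nat.sub_zero, Nat.sub_self, Nat.choose_zero_right, Nat.choose_self, An_zero]
          push_cast
          ring
        rw [hpeel, ← hc]
        ring
      have hβ : Filter.Tendsto
          (fun n => (c / 2) * ∑ j ∈ Finset.Ico 1 K, (K.choose j : ℝ) * An j n * An (K - j) n)
          Filter.atTop (nhds ((c / 2) * Sl)) := by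
        apply Filter.Tendsto.const_mul
        rw [hSl]
        apply tendsto_finset_sum
        intro j hj
        rw [Finset.mem_Ico] at hj
        exact (tendsto_const_nhds.mul (IH j (by omega))).mul (IH (K - j) (by omega))
      have haff := affine_tendsto (by positivity) hα1 hrec hβ
      have hlim : cycleMoment K = ((c / 2) * Sl) / (1 - 3 * (c / 2)) := by
        rw [hK, cycleMoment_eq k, ← hK, ← hSl]
        have h1 : c * (3 / 2 : ℝ) ^ K = 1 := by
          rw [hc, ← mul_pow]; norm_num
        have h2 : (3 / 2 : ℝ) ^ 2 ≤ (3 / 2 : ℝ) ^ K :=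
          pow_le_pow_right₀ (by norm_num) (by omega)
        have hden : (3 / 2 : ℝ) ^ K - 3 / 2 ≠ 0 := by
          norm_num at h2; intro h; linarith
        exact ratio_eq h1 hden (ne_of_gt hc0)
      rw [hlim]
      exact haff

theorem numCycles_eq_cyclesCount {M : ℕ} (σ : Equiv.Perm (Fin M)) :
    numCycles σ = cyclesCount σ := by
  unfold numCycles
  rw [cyclesCount_eq]
  congr 1
  rw [Equiv.Perm.cycleType_def, Multiset.card_map]
  rfl

/-- For every `k ≥ 1`, the normalized `k`-th moment of the number of cycles of a
uniform nonsimple binary butterfly permutation converges to `m_k`: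
`(2/3)^{nk} · (1/2^{2ⁿ−1}) Σ_{σ ∈ B_{2^n}} C(σ)^k → m_k` as `n → ∞`. -/
theorem nonsimpleButterfly_cycle_moment_limit (k : ℕ) (hk : 1 ≤ k) :
    Filter.Tendsto
      (fun n : ℕ => ((2 : ℝ) / 3) ^ (n * k) *
        ((1 / (2 : ℝ) ^ (2 ^ n - 1)) *
          ∑ᶠ σ ∈ nonsimpleButterfly 2 n, (numCycles σ : ℝ) ^ k))
      Filter.atTop (nhds (cycleMoment k)) := by
  have hconv : ∀ n : ℕ,
      ((2 : ℝ) / 3) ^ (n * k) * ((1 / (2 : ℝ) ^ (2 ^ n - 1)) *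
        ∑ᶠ σ ∈ nonsimpleButterfly 2 n, (numCycles σ : ℝ) ^ k) = An k n := by
    intro n
    have h1 : ∑ᶠ σ ∈ nonsimpleButterfly 2 n, (numCycles σ : ℝ) ^ k = Sm k n := by
      rw [← toPermP_range n, finsum_mem_range (toPermP_inj n), finsum_eq_sum_of_fintype]
      exact Finset.sum_congr rfl fun t _ => by rw [numCycles_eq_cyclesCount]
    rw [h1]
    rfl
  exact (An_tendsto k).congr fun n => (hconv n).symm
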